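/- Let X and Z be real symmetric positive definite n×n matrices. Then X^{1/2} (X^{1/2} Z X^{1/2})^{−1/2} X^{1/2} = Z^{−1/2} (Z^{1/2} X Z^{1/2})^{1/2} Z^{−1/2}. -/

import Mathlib

open Matrix

/-- The two expressions for the Nesterov–Todd scaling matrix coincide:
`X^{1/2} (X^{1/2} Z X^{1/2})^{−1/2} X^{1/2} = Z^{−1/2} (Z^{1/2} X Z^{1/2})^{1/2} Z^{−1/2}`.
Here `sX`, `sZ` are the (unique) symmetric positive definite square roots of `X`, `Z`, and
`M1`, `M2` are the symmetric positive definite square roots of `sX * Z * sX` and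
`sZ * X * sZ` respectively. -/
theorem nt_scaling_two_forms (n : ℕ) (X Z sX sZ M1 M2 : Matrix (Fin n) (Fin n) ℝ)
    (hX : X.PosDef) (hZ : Z.PosDef)
    (hsX : sX.PosDef) (hsX2 : sX * sX = X)
    (hsZ : sZ.PosDef) (hsZ2 : sZ * sZ = Z)
    (hM1 : M1.PosDef) (hM12 : M1 * M1 = sX * Z * sX)
    (hM2 : M2.PosDef) (hM22 : M2 * M2 = sZ * X * sZ) :
    sX * M1⁻¹ * sX = sZ⁻¹ * M2 * sZ⁻¹ := by
  have hdZ : IsUnit sZ.det := isUnit_iff_ne_zero.2 hsZ.det_pos.ne'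
  have hdM1 : IsUnit M1.det := isUnit_iff_ne_zero.2 hM1.det_pos.ne'
  set W : Matrix (Fin n) (Fin n) ℝ := sX * M1⁻¹ * sX with hW
  -- W is positive semidefinite
  have hWps : W.PosSemidef := by
    have := hM1.inv.posSemidef.mul_mul_conjTranspose_same sX
    rwa [hsX.isHermitian.eq] at this
  have hA : (sZ * W * sZ).PosSemidef := by
    have := hWps.mul_mul_conjTranspose_same sZ
    rwa [hsZ.isHermitian.eq] at this
  -- key squared identity
  have hWZW : W * Z * W = X := by
    have h1 : sX * Z * sX * M1⁻¹ = M1 := by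
      rw [hM12.symm, Matrix.mul_nonsing_inv_cancel_right _ _ hdM1]
    calc W * Z * W = sX * M1⁻¹ * (sX * Z * sX * M1⁻¹) * sX := by
          simp only [hW, Matrix.mul_assoc]
      _ = sX * M1⁻¹ * M1 * sX := by rw [h1]
      _ = sX * sX := by rw [Matrix.mul_assoc sX, Matrix.nonsing_inv_mul _ hdM1, Matrix.mul_one]
      _ = X := hsX2
  have hsq : (sZ * W * sZ) ^ 2 = M2 ^ 2 := by
    calc (sZ * W * sZ) ^ 2 = sZ * (W * (sZ * sZ) * W) * sZ := by
          rw [pow_two]; simp only [Matrix.mul_assoc]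
      _ = sZ * X * sZ := by rw [hsZ2, hWZW]
      _ = M2 ^ 2 := by rw [pow_two, hM22]
  have hE : sZ * W * sZ = M2 := by
    open scoped MatrixOrder in
    exact (CFC.sq_eq_sq_iff _ _ hA.nonneg hM2.posSemidef.nonneg).1 hsq
  have hfin : sZ⁻¹ * (sZ * W * sZ) * sZ⁻¹ = W := by
    rw [Matrix.mul_assoc sZ W sZ, Matrix.nonsing_inv_mul_cancel_left _ _ hdZ,
      Matrix.mul_nonsing_inv_cancel_right _ _ hdZ]
  rw [← hfin, hE]
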